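/- Let f be a continuous 2π-periodic function on 𝕋^d. Assume there exists a finite set {x^j}_{j=1}^m ⊂ 𝕋^d such that for every y ∈ 𝕋^d the translate f_y(x) := f(x − y) satisfies ‖f_y‖_∞ ≤ D·max_{1≤j≤m}|f_y(x^j)|. Then for any measurable set B ⊂ 𝕋^d with |B| < 1/m (normalized Lebesgue measure), ‖f‖_{L_∞(𝕋^d)} ≤ D·‖f‖_{L_∞(𝕋^d \ B)}. -/

import Mathlib

open MeasureTheory ENNReal

set_option synthInstance.maxHeartbeats 400000 in
theorem remez_from_translated_discretization
    [Fact (0 < 2 * Real.pi)]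
    (d : ℕ) (f : (Fin d → AddCircle (2 * Real.pi)) → ℝ) (hf : Continuous f)
    (D : ℝ) (hD : 1 ≤ D) (m : ℕ) (hm : 0 < m)
    (x : Fin m → Fin d → AddCircle (2 * Real.pi))
    (hdisc : ∀ y z : Fin d → AddCircle (2 * Real.pi),
      |f (z - y)| ≤ D * Finset.univ.sup' (Finset.univ_nonempty_iff.mpr ⟨⟨0, hm⟩⟩)
        (fun j => |f (x j - y)|))
    (B : Set (Fin d → AddCircle (2 * Real.pi))) (hB : MeasurableSet B)
    (hBsmall :
      (Measure.pi fun _ : Fin d => (ENNReal.ofReal (2 * Real.pi))⁻¹ • volume) B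
        < 1 / m) :
    ∀ z, |f z| ≤ D * sSup ((fun w => |f w|) '' Bᶜ) := by
  intro z
  set μ : Measure (Fin d → AddCircle (2 * Real.pi)) :=
    Measure.pi fun _ : Fin d => (ENNReal.ofReal (2 * Real.pi))⁻¹ • volume with hμ
  have h2pi : (0:ℝ) < 2 * Real.pi := by positivity
  haveI hp : ∀ i : Fin d, IsProbabilityMeasure
      ((ENNReal.ofReal (2 * Real.pi))⁻¹ • (volume : Measure (AddCircle (2*Real.pi)))) := by
    intro i
    constructor
    rw [Measure.smul_apply, AddCircle.measure_univ, smul_eq_mul,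
      ENNReal.inv_mul_cancel (by simp [ENNReal.ofReal_eq_zero]; positivity) ENNReal.ofReal_ne_top]
  haveI hni : ∀ i : Fin d, Measure.IsNegInvariant
      ((ENNReal.ofReal (2 * Real.pi))⁻¹ • (volume : Measure (AddCircle (2*Real.pi)))) := by
    intro i
    constructor
    rw [Measure.neg, Measure.map_smul, ← Measure.neg, Measure.neg_eq_self]
  haveI hprob : IsProbabilityMeasure μ := by rw [hμ]; infer_instance
  haveI hinv : μ.IsAddLeftInvariant := by rw [hμ]; exact Measure.pi.isAddLeftInvariant _
  haveI hneg : μ.IsNegInvariant := by rw [hμ]; exact @Measure.pi.isNegInvariant _ _ _ _ _ _ _ _ hni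
  -- measure of each translated preimage
  have hmp : ∀ j : Fin m, μ ((fun y => x j - y) ⁻¹' B) = μ B := by
    intro j
    exact (Measure.measurePreserving_sub_left μ (x j)).measure_preimage hB.nullMeasurableSet
  have hunion : μ (⋃ j : Fin m, (fun y => x j - y) ⁻¹' B) < 1 := by
    calc μ (⋃ j : Fin m, (fun y => x j - y) ⁻¹' B)
        ≤ ∑ j : Fin m, μ ((fun y => x j - y) ⁻¹' B) := measure_iUnion_fintype_le _ _
      _ = m * μ B := by simp [hmp, Finset.sum_const, mul_comm]
      _ < 1 := by
          have hm0 : (m : ℝ≥0∞) ≠ 0 := by exact_mod_cast hm.ne'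
          have hmtop : (m : ℝ≥0∞) ≠ ⊤ := by simp
          calc (m : ℝ≥0∞) * μ B < m * (1 / m) :=
                (ENNReal.mul_lt_mul_iff_right hm0 hmtop).mpr hBsmall
            _ = 1 := by
                rw [ENNReal.mul_div_cancel hm0 hmtop]
  have hne : (⋃ j : Fin m, (fun y => x j - y) ⁻¹' B) ≠ Set.univ := by
    intro h
    rw [h, measure_univ] at hunion
    exact lt_irrefl _ hunion
  obtain ⟨y, hy⟩ : ∃ y, ∀ j : Fin m, x j - y ∉ B := by
    rcases Set.ne_univ_iff_exists_notMem _ |>.mp hne with ⟨y, hy⟩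
    exact ⟨y, fun j hj => hy (Set.mem_iUnion.mpr ⟨j, hj⟩)⟩
  -- boundedness of |f| on Bᶜ
  have hbdd : BddAbove ((fun w => |f w|) '' Bᶜ) := by
    have hc : IsCompact ((fun w => |f w|) '' (Set.univ : Set (Fin d → AddCircle (2*Real.pi)))) :=
      isCompact_univ.image (continuous_abs.comp hf)
    exact hc.bddAbove.mono (Set.image_mono (Set.subset_univ _))
  have hle : ∀ j : Fin m, |f (x j - y)| ≤ sSup ((fun w => |f w|) '' Bᶜ) := by
    intro j
    exact le_csSup hbdd ⟨x j - y, hy j, rfl⟩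
  have key := hdisc y (z + y)
  rw [add_sub_cancel_right] at key
  refine key.trans ?_
  apply mul_le_mul_of_nonneg_left _ (by linarith)
  exact Finset.sup'_le _ _ fun j _ => hle j
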